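/- Let m ≥ 1 and let s_1, …, s_m be nonzero complex numbers (so y_i := s_i² are nonzero). Then there exists a nonzero vector ξ ∈ ℂ^m such that s_i⁶·ξ_i² = (∑_{j=1}^m s_j² ξ_j)² for every i = 1,…,m (i.e., L'_i(y,ξ) = 0 for all i, where L'_i = y_i³ξ_i² − (∑_j y_j ξ_j)²) if and only if there is a choice of signs ε_1, …, ε_m ∈ {−1, 1} with ∏_{j=1}^m s_j + ∑_{j=1}^m ε_j ∏_{k ≠ j} s_k = 0 (equivalently, 1 + ∑_j ε_j/s_j = 0). -/

import Mathlib

/-- for nonzero `y_i = s_i^2`, the system of principal symbols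
`L'_i = y_i^3 ξ_i^2 - (∑ y_j ξ_j)^2` has a nontrivial common zero `ξ ≠ 0`
iff `∏ s_j + ∑ ε_j ∏_{k ≠ j} s_k = 0` (i.e. `1 + ∑ ε_j / s_j = 0`)
for some choice of signs `ε_j ∈ {-1, 1}`. -/
theorem lauricella_char_variety_torus_infinity (m : ℕ) (hm : 1 ≤ m) (s : Fin m → ℂ)
    (hs : ∀ i, s i ≠ 0) :
    (∃ ξ : Fin m → ℂ, ξ ≠ 0 ∧
      ∀ i, s i ^ 6 * ξ i ^ 2 = (∑ j, s j ^ 2 * ξ j) ^ 2) ↔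
    (∃ ε : Fin m → ℂ, (∀ i, ε i = 1 ∨ ε i = -1) ∧
      (∏ j, s j) + ∑ j, ε j * ∏ k ∈ Finset.univ.erase j, s k = 0) := by
  constructor
  · rintro ⟨ξ, hξ, h⟩
    set T : ℂ := ∑ j, s j ^ 2 * ξ j with hTdef
    have hT : T ≠ 0 := by
      intro hT0
      apply hξ
      funext i
      have hi := h i
      rw [hT0] at hi
      simp only [Pi.zero_apply]
      have : (s i) ^ 6 * ξ i ^ 2 = 0 := by rw [hi]; ring
      rcases mul_eq_zero.mp this with h1 | h2
      · exact absurd (pow_eq_zero_iff (by norm_num) |>.mp h1) (hs i)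
      · simpa using pow_eq_zero_iff (n := 2) (by norm_num) |>.mp h2
    refine ⟨fun i => -(s i ^ 3 * ξ i) / T, ?_, ?_⟩
    · intro i
      have hi := h i
      have hsq : (-(s i ^ 3 * ξ i) / T) * (-(s i ^ 3 * ξ i) / T) = 1 := by
        field_simp
        linear_combination hi
      exact mul_self_eq_one_iff.mp hsq
    · have key : ∀ j ∈ Finset.univ, (-(s j ^ 3 * ξ j) / T) * ∏ k ∈ Finset.univ.erase j, s k
          = -(∏ k, s k) / T * (s j ^ 2 * ξ j) := by
        intro j _
        rw [← Finset.mul_prod_erase Finset.univ s (Finset.mem_univ j)]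
        ring
      rw [Finset.sum_congr rfl key, ← Finset.mul_sum, ← hTdef]
      field_simp
      ring
  · rintro ⟨ε, hε, heq⟩
    have hprod : (∏ j, s j) ≠ 0 := Finset.prod_ne_zero_iff.mpr fun i _ => hs i
    have hε2 : ∀ i, ε i ^ 2 = 1 := by
      intro i
      rcases hε i with h1 | h1 <;> rw [h1] <;> ring
    have hεne : ∀ i, ε i ≠ 0 := by
      intro i
      rcases hε i with h1 | h1 <;> rw [h1] <;> norm_num
    have key : ∀ j ∈ Finset.univ, ε j * ∏ k ∈ Finset.univ.erase j, s k
        = (∏ k, s k) * (ε j / s j) := by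
      intro j _
      rw [← Finset.mul_prod_erase Finset.univ s (Finset.mem_univ j)]
      field_simp [hs j]
    rw [Finset.sum_congr rfl key, ← Finset.mul_sum] at heq
    have hsum : ∑ j, ε j / s j = -1 := by
      have h0 : (∏ k, s k) * (1 + ∑ j, ε j / s j) = 0 := by linear_combination heq
      rcases mul_eq_zero.mp h0 with h1 | h1
      · exact absurd h1 hprod
      · linear_combination h1
    refine ⟨fun i => -ε i / s i ^ 3, ?_, ?_⟩
    · intro h0
      have h1 := congrFun h0 ⟨0, hm⟩
      simp only [Pi.zero_apply] at h1
      have : ε ⟨0, hm⟩ = 0 := by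
        field_simp [hs ⟨0, hm⟩] at h1
        simpa using h1
      exact hεne _ this
    · intro i
      have hTval : ∑ j, s j ^ 2 * (-ε j / s j ^ 3) = 1 := by
        have key2 : ∀ j ∈ Finset.univ, s j ^ 2 * (-ε j / s j ^ 3) = -(ε j / s j) := by
          intro j _
          field_simp [hs j]
        rw [Finset.sum_congr rfl key2, Finset.sum_neg_distrib, hsum]
        norm_num
      rw [hTval]
      have : s i ^ 6 * (-ε i / s i ^ 3) ^ 2 = ε i ^ 2 := by
        field_simp [hs i]
      rw [this, hε2 i]
      norm_num
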